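/- Let L be a Leibniz algebra over ℂ and J the solvable radical of L, i.e., a solvable ideal of L containing every solvable ideal of L. Then D(J) ⊆ J for every derivation D of L. -/

import Mathlib

/-- The span of all brackets `[x,y]` with `x ∈ M`, `y ∈ N`. -/
def bracketSpan {L : Type*} [AddCommGroup L] [Module ℂ L]
    (b : L →ₗ[ℂ] L →ₗ[ℂ] L) (M N : Submodule ℂ L) : Submodule ℂ L :=
  Submodule.span ℂ {z : L | ∃ x ∈ M, ∃ y ∈ N, z = b x y}

/-- A submodule `J` of a Leibniz algebra with bracket `b` is an ideal if
`[J,L] ⊆ J` and `[L,J] ⊆ J`. -/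
def IsLeibnizIdeal {L : Type*} [AddCommGroup L] [Module ℂ L]
    (b : L →ₗ[ℂ] L →ₗ[ℂ] L) (J : Submodule ℂ L) : Prop :=
  (∀ x ∈ J, ∀ y : L, b x y ∈ J) ∧ (∀ x ∈ J, ∀ y : L, b y x ∈ J)

/-- The derived series of a submodule `M`: `leibnizDerivedSeries b M n = M^{(n+1)}`, i.e.
`leibnizDerivedSeries b M 0 = M (= M^{(1)})` and `M^{(n+1)} = [M^{(n)}, M^{(n)}]`. -/
def leibnizDerivedSeries {L : Type*} [AddCommGroup L] [Module ℂ L]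
    (b : L →ₗ[ℂ] L →ₗ[ℂ] L) (M : Submodule ℂ L) : ℕ → Submodule ℂ L
  | 0 => M
  | n + 1 => bracketSpan b (leibnizDerivedSeries b M n) (leibnizDerivedSeries b M n)

/-- A submodule `M` is solvable if some term of its derived series vanishes. -/
def IsSolvableSubmodule {L : Type*} [AddCommGroup L] [Module ℂ L]
    (b : L →ₗ[ℂ] L →ₗ[ℂ] L) (M : Submodule ℂ L) : Prop :=
  ∃ s : ℕ, leibnizDerivedSeries b M s = ⊥

section Aux

variable {L : Type*} [AddCommGroup L] [Module ℂ L] (b : L →ₗ[ℂ] L →ₗ[ℂ] L)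

lemma mem_bracketSpan' {M N : Submodule ℂ L} {x y : L} (hx : x ∈ M) (hy : y ∈ N) :
    b x y ∈ bracketSpan b M N :=
  Submodule.subset_span ⟨x, hx, y, hy, rfl⟩

lemma bracketSpan_le' {M N P : Submodule ℂ L}
    (h : ∀ x ∈ M, ∀ y ∈ N, b x y ∈ P) : bracketSpan b M N ≤ P := by
  rw [bracketSpan, Submodule.span_le]
  rintro z ⟨x, hx, y, hy, rfl⟩
  exact h x hx y hy

lemma bracketSpan_mono' {M N M' N' : Submodule ℂ L} (h1 : M ≤ M') (h2 : N ≤ N') :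
    bracketSpan b M N ≤ bracketSpan b M' N' := by
  apply Submodule.span_mono
  rintro z ⟨x, hx, y, hy, rfl⟩
  exact ⟨x, h1 hx, y, h2 hy, rfl⟩

lemma leibnizDerivedSeries_mono {M N : Submodule ℂ L} (h : M ≤ N) :
    ∀ n, leibnizDerivedSeries b M n ≤ leibnizDerivedSeries b N n := by
  intro n
  induction n with
  | zero => exact h
  | succ n ih => exact bracketSpan_mono' b ih ih

lemma leibnizDerivedSeries_add (M : Submodule ℂ L) (m : ℕ) :
    ∀ n, leibnizDerivedSeries b M (m + n)
      = leibnizDerivedSeries b (leibnizDerivedSeries b M m) n := by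
  intro n
  induction n with
  | zero => rfl
  | succ n ih =>
    show leibnizDerivedSeries b M ((m + n) + 1) = _
    rw [show leibnizDerivedSeries b M ((m + n) + 1)
        = bracketSpan b (leibnizDerivedSeries b M (m + n)) (leibnizDerivedSeries b M (m + n))
        from rfl, ih]
    rfl

open Finset in
/-- Generalized Leibniz rule for powers of a derivation. -/
lemma derivation_pow_bracket (D : Module.End ℂ L)
    (hD : ∀ x y : L, D (b x y) = b (D x) y + b x (D y)) :
    ∀ (k : ℕ) (x y : L), (D ^ k) (b x y)
      = ∑ i ∈ range (k + 1), (k.choose i : ℂ) • b ((D ^ i) x) ((D ^ (k - i)) y) := by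
  have hpow : ∀ (m : ℕ) (z : L), (D ^ (m + 1)) z = D ((D ^ m) z) := by
    intro m z
    rw [pow_succ']
    rfl
  intro k
  induction k with
  | zero => intro x y; simp
  | succ k ih =>
    intro x y
    set T : ℕ → L := fun i => b ((D ^ i) x) ((D ^ (k + 1 - i)) y) with hT
    rw [hpow, ih, map_sum]
    have hterm : ∀ i ∈ range (k + 1),
        D ((k.choose i : ℂ) • b ((D ^ i) x) ((D ^ (k - i)) y))
        = (k.choose i : ℂ) • T (i + 1) + (k.choose i : ℂ) • T i := by
      intro i hi
      rw [map_smul, hD, smul_add]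
      congr 2
      · show b ((D ((D ^ i) x))) ((D ^ (k - i)) y) = b ((D ^ (i + 1)) x) ((D ^ (k + 1 - (i + 1))) y)
        rw [← hpow, Nat.succ_sub_succ]
      · show b ((D ^ i) x) (D ((D ^ (k - i)) y)) = b ((D ^ i) x) ((D ^ (k + 1 - i)) y)
        have hik : i ≤ k := by simpa [Nat.lt_succ_iff] using hi
        have h1 : k - i + 1 = k + 1 - i := by omega
        rw [← hpow, h1]
    rw [Finset.sum_congr rfl hterm, Finset.sum_add_distrib]
    have hR : ∑ i ∈ range (k + 1 + 1), ((k+1).choose i : ℂ) • b ((D ^ i) x) ((D ^ (k + 1 - i)) y)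
        = ∑ i ∈ range (k + 1), ((k+1).choose (i+1) : ℂ) • T (i + 1) + T 0 := by
      rw [Finset.sum_range_succ']
      simp [hT]
    rw [hR]
    have hsplit : ∀ i, ((k+1).choose (i+1) : ℂ) = (k.choose i : ℂ) + (k.choose (i+1) : ℂ) := by
      intro i
      rw [Nat.choose_succ_succ]
      push_cast
      ring
    have : ∑ i ∈ range (k + 1), ((k+1).choose (i+1) : ℂ) • T (i + 1)
        = ∑ i ∈ range (k + 1), (k.choose i : ℂ) • T (i + 1)
          + ∑ i ∈ range (k + 1), (k.choose (i+1) : ℂ) • T (i + 1) := by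
      rw [← Finset.sum_add_distrib]
      apply Finset.sum_congr rfl
      intro i _
      rw [hsplit, add_smul]
    rw [this]
    have hL2 : ∑ i ∈ range (k + 1), (k.choose i : ℂ) • T i
        = ∑ i ∈ range k, (k.choose (i+1) : ℂ) • T (i + 1) + T 0 := by
      rw [Finset.sum_range_succ']
      simp
    have hL3 : ∑ i ∈ range (k + 1), (k.choose (i+1) : ℂ) • T (i + 1)
        = ∑ i ∈ range k, (k.choose (i+1) : ℂ) • T (i + 1) := by
      rw [Finset.sum_range_succ]
      simp
    rw [hL2, hL3]
    abel

end Aux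

/-- Let `L` be a Leibniz algebra over ℂ and `J` the solvable radical of `L`
(a solvable ideal containing every solvable ideal). Then `D(J) ⊆ J` for every derivation
`D` of `L`. -/
theorem leibniz_solvable_radical_invariant_under_derivations
    {L : Type*} [AddCommGroup L] [Module ℂ L]
    (b : L →ₗ[ℂ] L →ₗ[ℂ] L)
    (leib : ∀ x y z : L, b (b x y) z = b (b x z) y + b x (b y z))
    (J : Submodule ℂ L)
    (hJ : IsLeibnizIdeal b J)
    (hJsolv : IsSolvableSubmodule b J)
    (hJmax : ∀ I : Submodule ℂ L, IsLeibnizIdeal b I → IsSolvableSubmodule b I → I ≤ J) :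
    ∀ D : Module.End ℂ L, (∀ x y : L, D (b x y) = b (D x) y + b x (D y)) →
      J.map D ≤ J := by
  intro D hD
  obtain ⟨s, hs⟩ := hJsolv
  set S : ℕ → Submodule ℂ L := leibnizDerivedSeries b J with hS
  have hSsucc : ∀ n, S (n + 1) = bracketSpan b (S n) (S n) := fun n => rfl
  have binom := derivation_pow_bracket b D hD
  -- Key vanishing lemma: D^k (S n) ⊆ J for k < 2^n.
  have lemA : ∀ n, ∀ k, k < 2 ^ n → ∀ u ∈ S n, (D ^ k) u ∈ J := by
    intro n
    induction n with
    | zero =>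
      intro k hk u hu
      interval_cases k
      rw [pow_zero, Module.End.one_apply]
      exact hu
    | succ n ih =>
      intro k hk u hu
      have hle : S (n + 1) ≤ J.comap (D ^ k) := by
        rw [hSsucc]
        apply bracketSpan_le' b
        intro x hx y hy
        rw [Submodule.mem_comap, binom k x y]
        apply Submodule.sum_mem
        intro i hi
        apply Submodule.smul_mem
        rcases lt_or_ge i (2 ^ n) with h | h
        · exact hJ.1 _ (ih i h x hx) _
        · have h2 : k - i < 2 ^ n := by
            have : 2 ^ (n + 1) = 2 * 2 ^ n := by ring
            omega
          exact hJ.2 _ (ih _ h2 y hy) _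
      exact hle hu
  set B : Submodule ℂ L := J ⊔ J.map D with hB
  -- B is an ideal
  have hBmem : ∀ x ∈ B, ∃ j ∈ J, ∃ u ∈ J, x = j + D u := by
    intro x hx
    rw [hB, Submodule.mem_sup] at hx
    obtain ⟨j, hj, w, hw, rfl⟩ := hx
    obtain ⟨u, hu, rfl⟩ := hw
    exact ⟨j, hj, u, hu, rfl⟩
  have hBideal : IsLeibnizIdeal b B := by
    constructor
    · intro x hx y
      obtain ⟨j, hj, u, hu, rfl⟩ := hBmem x hx
      have h1 : b j y ∈ B := le_sup_left (α := Submodule ℂ L) (hJ.1 j hj y)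
      have h2 : b (D u) y = D (b u y) - b u (D y) := by
        have := hD u y
        rw [this]; abel
      have h3 : b (D u) y ∈ B := by
        rw [h2]
        apply Submodule.sub_mem
        · exact le_sup_right (α := Submodule ℂ L) (Submodule.mem_map_of_mem (hJ.1 u hu y))
        · exact le_sup_left (α := Submodule ℂ L) (hJ.1 u hu (D y))
      have : b (j + D u) y = b j y + b (D u) y := by
        rw [map_add]; rfl
      rw [this]
      exact Submodule.add_mem _ h1 h3
    · intro x hx y
      obtain ⟨j, hj, u, hu, rfl⟩ := hBmem x hx
      have h1 : b y j ∈ B := le_sup_left (α := Submodule ℂ L) (hJ.2 j hj y)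
      have h2 : b y (D u) = D (b y u) - b (D y) u := by
        have := hD y u
        rw [this]; abel
      have h3 : b y (D u) ∈ B := by
        rw [h2]
        apply Submodule.sub_mem
        · exact le_sup_right (α := Submodule ℂ L) (Submodule.mem_map_of_mem (hJ.2 u hu y))
        · exact le_sup_left (α := Submodule ℂ L) (hJ.2 u hu (D y))
      have : b y (j + D u) = b y j + b y (D u) := map_add (b y) j (D u)
      rw [this]
      exact Submodule.add_mem _ h1 h3
  -- derived series of B
  have key : ∀ n, leibnizDerivedSeries b B n ≤ J ⊔ (S n).map (D ^ (2 ^ n)) := by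
    intro n
    induction n with
    | zero =>
      show B ≤ J ⊔ (S 0).map (D ^ 1)
      rw [pow_one]
      exact le_of_eq rfl
    | succ n ih =>
      show bracketSpan b (leibnizDerivedSeries b B n) (leibnizDerivedSeries b B n) ≤ _
      refine le_trans (bracketSpan_mono' b ih ih) ?_
      apply bracketSpan_le' b
      intro x hx y hy
      set k : ℕ := 2 ^ n with hk
      set V : Submodule ℂ L := J ⊔ (S (n + 1)).map (D ^ (2 ^ (n + 1))) with hV
      have hJV : J ≤ V := le_sup_left
      rw [Submodule.mem_sup] at hx hy
      obtain ⟨j1, hj1, w1, hw1, rfl⟩ := hx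
      obtain ⟨j2, hj2, w2, hw2, rfl⟩ := hy
      rw [Submodule.mem_map] at hw1 hw2
      obtain ⟨u, hu, rfl⟩ := hw1
      obtain ⟨v, hv, rfl⟩ := hw2
      have hexpand : b (j1 + (D ^ k) u) (j2 + (D ^ k) v)
          = b j1 (j2 + (D ^ k) v) + b ((D ^ k) u) j2 + b ((D ^ k) u) ((D ^ k) v) := by
        simp only [map_add, LinearMap.add_apply]
        abel
      rw [hexpand]
      apply Submodule.add_mem
      apply Submodule.add_mem
      · exact hJV (hJ.1 j1 hj1 _)
      · exact hJV (hJ.2 j2 hj2 _)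
      -- the main term
      · have hbuv : b u v ∈ S (n + 1) := by
          rw [hSsucc]
          exact mem_bracketSpan' b hu hv
        have h2k : 2 ^ (n + 1) = 2 * k := by rw [hk]; ring
        set c : ℂ := ((2 * k).choose k : ℂ) with hc
        have hcne : c ≠ 0 := by
          rw [hc]
          exact_mod_cast Nat.cast_ne_zero.mpr (Nat.choose_pos (by omega)).ne'
        have hsum := binom (2 * k) u v
        have hksub : 2 * k - k = k := by omega
        have hmem_k : k ∈ Finset.range (2 * k + 1) := by
          rw [Finset.mem_range]; omega
        have hsplit : c • b ((D ^ k) u) ((D ^ k) v)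
            = (D ^ (2 * k)) (b u v)
              - ∑ i ∈ (Finset.range (2 * k + 1)).erase k,
                  ((2 * k).choose i : ℂ) • b ((D ^ i) u) ((D ^ (2 * k - i)) v) := by
          rw [eq_sub_iff_add_eq, hsum, ← Finset.add_sum_erase _ _ hmem_k, hksub]
        have hrest : ∑ i ∈ (Finset.range (2 * k + 1)).erase k,
            ((2 * k).choose i : ℂ) • b ((D ^ i) u) ((D ^ (2 * k - i)) v) ∈ J := by
          apply Submodule.sum_mem
          intro i hi
          rw [Finset.mem_erase, Finset.mem_range] at hi
          apply Submodule.smul_mem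
          rcases lt_or_ge i k with h | h
          · exact hJ.1 _ (lemA n i h u hu) _
          · have hik : i > k := lt_of_le_of_ne h (Ne.symm hi.1)
            have hkpos : 0 < k := by rw [hk]; positivity
            have h2 : 2 * k - i < k := by omega
            exact hJ.2 _ (lemA n _ h2 v hv) _
        have hmain : c • b ((D ^ k) u) ((D ^ k) v) ∈ V := by
          rw [hsplit]
          apply Submodule.sub_mem
          · apply le_sup_right (α := Submodule ℂ L)
            rw [← h2k] at *
            exact Submodule.mem_map_of_mem hbuv
          · exact hJV hrest
        have := V.smul_mem c⁻¹ hmain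
        rwa [smul_smul, inv_mul_cancel₀ hcne, one_smul] at this
  -- conclude solvability of B
  have hBs : leibnizDerivedSeries b B s ≤ J := by
    have := key s
    rw [hs] at this
    simpa using this
  have hBsolv : IsSolvableSubmodule b B := by
    refine ⟨s + s, le_bot_iff.mp ?_⟩
    rw [leibnizDerivedSeries_add b B s s]
    calc leibnizDerivedSeries b (leibnizDerivedSeries b B s) s
        ≤ leibnizDerivedSeries b J s := leibnizDerivedSeries_mono b hBs s
      _ = ⊥ := hs
  have hBle : B ≤ J := hJmax B hBideal hBsolv
  exact le_trans (le_trans le_sup_right hBle) le_rfl
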